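/- Let 0 < γ < 1, l ∈ ℕ with l ≥ 1, 0 < α ≤ 1, lα ≤ 1 < (l+1)α, and lα + γ > 1. Then for all 0 < x < y, y^(γ-1) (y-x)^(lα) + (x^(γ-1) - y^(γ-1)) x^(lα) ≤ 2 (y-x)^(lα+γ-1). -/

import Mathlib

open Real

/-- Key estimate: `x^(γ-1) - y^(γ-1) ≤ x^(γ-2) * (y - x)` for `0 < γ < 1`, `0 < x < y`. -/
lemma aux_diff_le (γ : ℝ) (hγ0 : 0 < γ) (hγ1 : γ < 1) {x y : ℝ} (hx : 0 < x) (hxy : x < y) :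
    x ^ (γ - 1) - y ^ (γ - 1) ≤ x ^ (γ - 2) * (y - x) := by
  have hy : 0 < y := hx.trans hxy
  set s : ℝ := (y - x) / x with hs
  have hs0 : 0 < s := div_pos (by linarith) hx
  set a : ℝ := (1 - γ) * s with ha
  have ha0 : 0 < a := mul_pos (by linarith) hs0
  -- Bernoulli: (1 + s)^(1-γ) ≤ 1 + (1-γ)s
  have hb : (1 + s) ^ (1 - γ) ≤ 1 + a :=
    rpow_one_add_le_one_add_mul_self (by linarith) (by linarith) (by linarith)
  have hpos : (0:ℝ) < (1 + s) ^ (1 - γ) := rpow_pos_of_pos (by linarith) _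
  -- hence 1 - a ≤ (1+s)^(γ-1)
  have h2 : 1 - a ≤ 1 / (1 + a) := by
    rw [le_div_iff₀ (by linarith)]
    nlinarith
  have h3 : 1 / (1 + a) ≤ 1 / ((1 + s) ^ (1 - γ)) :=
    one_div_le_one_div_of_le hpos hb
  have h4 : (1 + s) ^ (γ - 1) = 1 / ((1 + s) ^ (1 - γ)) := by
    rw [show γ - 1 = -(1 - γ) by ring, rpow_neg (by linarith : (0:ℝ) ≤ 1 + s), one_div]
  have h5 : 1 - a ≤ (1 + s) ^ (γ - 1) := by rw [h4]; exact h2.trans h3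
  -- multiply by x^(γ-1) > 0
  have hxp : (0:ℝ) < x ^ (γ - 1) := rpow_pos_of_pos hx _
  have h6 : x ^ (γ - 1) * (1 - a) ≤ x ^ (γ - 1) * (1 + s) ^ (γ - 1) :=
    mul_le_mul_of_nonneg_left h5 hxp.le
  have h7 : x ^ (γ - 1) * (1 + s) ^ (γ - 1) = y ^ (γ - 1) := by
    rw [← mul_rpow hx.le (by linarith)]
    congr 1
    rw [hs]
    field_simp; ring
  have h8 : x ^ (γ - 2) = x ^ (γ - 1) / x := by
    rw [show γ - 2 = (γ - 1) - 1 by ring, rpow_sub hx, rpow_one]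
  have h9 : x ^ (γ - 1) * a = (1 - γ) * (x ^ (γ - 2) * (y - x)) := by
    rw [h8, ha, hs]; field_simp
  have h10 : x ^ (γ - 1) - y ^ (γ - 1) ≤ (1 - γ) * (x ^ (γ - 2) * (y - x)) := by
    rw [← h9]; rw [h7] at h6; linarith [h6]
  have hnn : 0 ≤ x ^ (γ - 2) * (y - x) := by
    have := rpow_pos_of_pos hx (γ - 2); nlinarith
  nlinarith [h10]

theorem stmt1 (γ α : ℝ) (l : ℕ) (hγ0 : 0 < γ) (hγ1 : γ < 1)
    (hl : 1 ≤ l) (hα0 : 0 < α) (hα1 : α ≤ 1)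
    (hlα : (l : ℝ) * α ≤ 1) (hlα' : 1 < ((l : ℝ) + 1) * α)
    (h1 : 1 < (l : ℝ) * α + γ) :
    ∀ x y : ℝ, 0 < x → x < y →
      y ^ (γ - 1) * (y - x) ^ ((l : ℝ) * α) +
        (x ^ (γ - 1) - y ^ (γ - 1)) * x ^ ((l : ℝ) * α) ≤
        2 * (y - x) ^ ((l : ℝ) * α + γ - 1) := by
  intro x y hx hxy
  have hy : 0 < y := hx.trans hxy
  set d : ℝ := y - x with hd
  have hd0 : 0 < d := by simp [hd]; linarith
  set s : ℝ := (l : ℝ) * α with hsdef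
  have hs0 : 0 < s := by positivity
  -- first term: y^(γ-1) d^s ≤ d^(s+γ-1)
  have hA : y ^ (γ - 1) * d ^ s ≤ d ^ (s + γ - 1) := by
    have h1' : y ^ (γ - 1) ≤ d ^ (γ - 1) :=
      rpow_le_rpow_of_nonpos hd0 (by linarith) (by linarith)
    calc y ^ (γ - 1) * d ^ s ≤ d ^ (γ - 1) * d ^ s :=
          mul_le_mul_of_nonneg_right h1' (rpow_nonneg hd0.le _)
      _ = d ^ (s + γ - 1) := by
          rw [← rpow_add hd0]; ring_nf
  -- second term
  have hB : (x ^ (γ - 1) - y ^ (γ - 1)) * x ^ s ≤ d ^ (s + γ - 1) := by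
    rcases le_or_gt x d with hcase | hcase
    · -- x ≤ d : drop y term, x^(γ-1+s) ≤ d^(γ-1+s)
      have h1' : x ^ (γ - 1) - y ^ (γ - 1) ≤ x ^ (γ - 1) := by
        have := rpow_pos_of_pos hy (γ - 1); linarith
      calc (x ^ (γ - 1) - y ^ (γ - 1)) * x ^ s
          ≤ x ^ (γ - 1) * x ^ s :=
            mul_le_mul_of_nonneg_right h1' (rpow_nonneg hx.le _)
        _ = x ^ (s + γ - 1) := by rw [← rpow_add hx]; ring_nf
        _ ≤ d ^ (s + γ - 1) := rpow_le_rpow hx.le hcase (by linarith)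
    · -- d < x : use derivative bound
      have h1' := aux_diff_le γ hγ0 hγ1 hx hxy
      have hxs : (0:ℝ) ≤ x ^ s := (rpow_pos_of_pos hx s).le
      have h2' : (x ^ (γ - 1) - y ^ (γ - 1)) * x ^ s ≤ x ^ (s + γ - 2) * d := by
        calc (x ^ (γ - 1) - y ^ (γ - 1)) * x ^ s ≤ (x ^ (γ - 2) * d) * x ^ s :=
              mul_le_mul_of_nonneg_right h1' hxs
          _ = x ^ (s + γ - 2) * d := by
              rw [show s + γ - 2 = (γ - 2) + s by ring, rpow_add hx]; ring
      have h3' : x ^ (s + γ - 2) ≤ d ^ (s + γ - 2) :=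
        rpow_le_rpow_of_nonpos hd0 hcase.le (by linarith)
      calc (x ^ (γ - 1) - y ^ (γ - 1)) * x ^ s ≤ x ^ (s + γ - 2) * d := h2'
        _ ≤ d ^ (s + γ - 2) * d := mul_le_mul_of_nonneg_right h3' hd0.le
        _ = d ^ (s + γ - 1) := by
            rw [show s + γ - 1 = (s + γ - 2) + 1 by ring, rpow_add hd0, rpow_one]
  calc y ^ (γ - 1) * d ^ s + (x ^ (γ - 1) - y ^ (γ - 1)) * x ^ s
      ≤ d ^ (s + γ - 1) + d ^ (s + γ - 1) := add_le_add hA hB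
    _ = 2 * d ^ (s + γ - 1) := by ring
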